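/- Let (Z_{m,n})_{m,n∈ℕ} be random variables uniformly bounded by 1 with mean zero, such that for each fixed m the variables (Z_{m,n})_{n≥1} are independent. Let (ρ_n) be positive reals with sup_m Var(Z_{m,n}) ≤ ρ_n and (1/log N) ∑_{n=1}^N ρ_n → ∞. Then almost surely there is a finite constant C(ω) such that for all N ≥ 2, max_{1≤m≤N} max_{t∈[0,1]} |∑_{n=1}^N Z_{m,n} e(nt)| ≤ C(ω) √(log N · ∑_{n=1}^N ρ_n), where e(t) = e^{2πit}. -/

import Mathlib

open Filter MeasureTheory ProbabilityTheory Real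
open scoped ENNReal

lemma exp_le_quad {x : ℝ} (hx : |x| ≤ 1) : Real.exp x ≤ 1 + x + x ^ 2 := by
  have h := Real.exp_bound hx (n := 2) (by norm_num)
  have h2 : ∑ i ∈ Finset.range 2, x ^ i / (Nat.factorial i) = 1 + x := by
    simp [Finset.sum_range_succ]
  rw [h2] at h
  have h3 : |x| ^ 2 = x ^ 2 := sq_abs x
  have := abs_le.mp h
  norm_num at this
  nlinarith [this.1, this.2, sq_nonneg x]

lemma exp_I_diff (a b : ℝ) :
    ‖Complex.exp ((a : ℂ) * Complex.I) - Complex.exp ((b : ℂ) * Complex.I)‖ ≤ 2 * |a - b| := by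
  have h1 : Complex.exp ((a : ℂ) * Complex.I) - Complex.exp ((b : ℂ) * Complex.I)
      = Complex.exp ((b : ℂ) * Complex.I) * (Complex.exp (((a - b : ℝ) : ℂ) * Complex.I) - 1) := by
    rw [mul_sub, mul_one, ← Complex.exp_add]
    push_cast
    ring_nf
  rw [h1, norm_mul]
  have h2 : ‖Complex.exp ((b : ℂ) * Complex.I)‖ = 1 := Complex.norm_exp_ofReal_mul_I b
  rw [h2, one_mul]
  have habs : ‖((a - b : ℝ) : ℂ) * Complex.I‖ = |a - b| := by
    rw [norm_mul, Complex.norm_I, mul_one, Complex.norm_real, Real.norm_eq_abs]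
  rcases le_or_gt (|a - b|) 1 with h | h
  · have := Complex.norm_exp_sub_one_le (x := ((a - b : ℝ) : ℂ) * Complex.I) (by rw [habs]; exact h)
    rw [habs] at this
    exact this
  · calc ‖Complex.exp (((a - b : ℝ) : ℂ) * Complex.I) - 1‖
        ≤ ‖Complex.exp (((a - b : ℝ) : ℂ) * Complex.I)‖ + ‖(1:ℂ)‖ := norm_sub_le _ _
      _ = 2 := by
          rw [show ‖Complex.exp (((a - b : ℝ) : ℂ) * Complex.I)‖ = 1 from
            Complex.norm_exp_ofReal_mul_I _]; norm_num
      _ ≤ 2 * |a - b| := by nlinarith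

lemma integrable_of_bdd {Ω : Type*} [MeasurableSpace Ω] {μ : Measure Ω} [IsProbabilityMeasure μ]
    {f : Ω → ℝ} (hf : Measurable f) {c : ℝ} (hb : ∀ ω, |f ω| ≤ c) : Integrable f μ :=
  Integrable.mono' (integrable_const c) hf.aestronglyMeasurable (ae_of_all _ fun ω => hb ω)

lemma mgf_aux {Ω : Type*} [MeasurableSpace Ω] (μ : Measure Ω) [IsProbabilityMeasure μ]
    (X : Ω → ℝ) (hX : Measurable X) (hb : ∀ ω, |X ω| ≤ 1)
    (hm : ∫ ω, X ω ∂μ = 0) {v l : ℝ} (hv : ∫ ω, (X ω) ^ 2 ∂μ ≤ v) (hl : |l| ≤ 1) :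
    mgf X μ l ≤ Real.exp (l ^ 2 * v) := by
  have hint1 : Integrable X μ := integrable_of_bdd hX hb
  have hint2 : Integrable (fun ω => (X ω) ^ 2) μ := by
    refine integrable_of_bdd (hX.pow_const 2) (c := 1) fun ω => ?_
    rw [abs_pow]
    calc |X ω| ^ 2 ≤ 1 ^ 2 := pow_le_pow_left₀ (abs_nonneg _) (hb ω) 2
    _ = 1 := one_pow 2
  have hintE : Integrable (fun ω => Real.exp (l * X ω)) μ := by
    refine integrable_of_bdd (hX.const_mul l).exp (c := Real.exp 1) fun ω => ?_
    rw [abs_of_nonneg (Real.exp_pos _).le]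
    exact Real.exp_le_exp.mpr <| (le_abs_self _).trans <| by
      rw [abs_mul]; exact mul_le_one₀ hl (abs_nonneg _) (hb ω)
  have key : ∀ ω, Real.exp (l * X ω) ≤ 1 + l * X ω + (l * X ω) ^ 2 := fun ω =>
    exp_le_quad (by rw [abs_mul]; exact mul_le_one₀ hl (abs_nonneg _) (hb ω))
  have h1 : mgf X μ l ≤ ∫ ω, (1 + l * X ω + (l * X ω) ^ 2) ∂μ := by
    refine integral_mono hintE ?_ key
    have : (fun ω => 1 + l * X ω + (l * X ω) ^ 2)
        = fun ω => 1 + l * X ω + l ^ 2 * (X ω) ^ 2 := by funext ω; ring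
    rw [this]
    exact ((integrable_const 1).add (hint1.const_mul l)).add (hint2.const_mul _)
  have h2 : ∫ ω, (1 + l * X ω + (l * X ω) ^ 2) ∂μ = 1 + l ^ 2 * ∫ ω, (X ω) ^ 2 ∂μ := by
    have : (fun ω => 1 + l * X ω + (l * X ω) ^ 2)
        = fun ω => 1 + l * X ω + l ^ 2 * (X ω) ^ 2 := by funext ω; ring
    rw [this, integral_add (by exact (integrable_const 1).add (hint1.const_mul l))
      (hint2.const_mul _), integral_add (integrable_const 1) (hint1.const_mul l),
      integral_const, integral_const_mul, integral_const_mul, hm]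
    simp
  calc mgf X μ l ≤ 1 + l ^ 2 * ∫ ω, (X ω) ^ 2 ∂μ := h2 ▸ h1
    _ ≤ 1 + l ^ 2 * v := by nlinarith [sq_nonneg l]
    _ ≤ Real.exp (l ^ 2 * v) := by linarith [Real.add_one_le_exp (l ^ 2 * v)]

lemma tail_bound {Ω : Type*} [MeasurableSpace Ω] (μ : Measure Ω) [IsProbabilityMeasure μ]
    (Y : ℕ → Ω → ℝ) (hmeas : ∀ n, Measurable (Y n)) (hbdd : ∀ n ω, |Y n ω| ≤ 1)
    (hmean : ∀ n, ∫ ω, Y n ω ∂μ = 0)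
    (hind : iIndepFun Y μ)
    (ρ : ℕ → ℝ) (hρ : ∀ n, 0 ≤ ρ n) (hvar : ∀ n, variance (Y n) μ ≤ ρ n)
    (a : ℕ → ℝ) (ha : ∀ n, |a n| ≤ 1) (N : ℕ) {x : ℝ} (hx : 0 < x)
    (hxR : x ≤ 2 * ∑ n ∈ Finset.Icc 1 N, ρ n) :
    μ {ω | x ≤ ∑ n ∈ Finset.Icc 1 N, a n * Y n ω} ≤
      ENNReal.ofReal (Real.exp (-(x ^ 2) / (4 * ∑ n ∈ Finset.Icc 1 N, ρ n))) := by
  set R : ℝ := ∑ n ∈ Finset.Icc 1 N, ρ n with hR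
  have hRpos : 0 < R := by linarith
  set l : ℝ := x / (2 * R) with hldef
  have hlpos : 0 < l := div_pos hx (by linarith)
  have hl1 : l ≤ 1 := (div_le_one (by linarith)).mpr hxR
  -- the summands
  set X : ℕ → Ω → ℝ := fun n ω => a n * Y n ω with hX
  have hXmeas : ∀ n, Measurable (X n) := fun n => (hmeas n).const_mul (a n)
  have hXbdd : ∀ n ω, |X n ω| ≤ 1 := fun n ω => by
    rw [hX]; dsimp only; rw [abs_mul]
    exact mul_le_one₀ (ha n) (abs_nonneg _) (hbdd n ω)
  have hXind : iIndepFun X μ := by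
    have := hind.comp (g := fun n (y : ℝ) => a n * y) (fun n => (measurable_id.const_mul _))
    exact this
  -- mgf of each summand
  have hmgf : ∀ n, mgf (X n) μ l ≤ Real.exp (l ^ 2 * ρ n) := by
    intro n
    have hmem : MemLp (Y n) 2 μ :=
      MemLp.of_bound (hmeas n).aestronglyMeasurable 1 (ae_of_all _ fun ω => hbdd n ω)
    have hY2 : ∫ ω, (Y n ω) ^ 2 ∂μ = variance (Y n) μ := by
      rw [variance_eq_sub hmem, hmean n]; simp
    have hX2 : ∫ ω, (X n ω) ^ 2 ∂μ = (a n) ^ 2 * ∫ ω, (Y n ω) ^ 2 ∂μ := by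
      rw [← integral_const_mul]
      congr 1 with ω
      rw [hX]; dsimp only; ring
    have hXv : ∫ ω, (X n ω) ^ 2 ∂μ ≤ ρ n := by
      rw [hX2, hY2]
      calc (a n) ^ 2 * variance (Y n) μ ≤ 1 * variance (Y n) μ := by
            apply mul_le_mul_of_nonneg_right _ (variance_nonneg _ _)
            calc (a n) ^ 2 = |a n| ^ 2 := (sq_abs _).symm
              _ ≤ 1 ^ 2 := pow_le_pow_left₀ (abs_nonneg _) (ha n) 2
              _ = 1 := one_pow 2
        _ ≤ ρ n := by rw [one_mul]; exact hvar n
    have hXmean : ∫ ω, X n ω ∂μ = 0 := by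
      rw [hX]; dsimp only; rw [integral_const_mul, hmean n, mul_zero]
    exact mgf_aux μ (X n) (hXmeas n) (hXbdd n) hXmean hXv
      (by rw [abs_of_pos hlpos]; exact hl1)
  -- mgf of the sum
  have hsum_meas : Measurable (∑ n ∈ Finset.Icc 1 N, X n) := by
    rw [show (∑ n ∈ Finset.Icc 1 N, X n) = fun ω => ∑ n ∈ Finset.Icc 1 N, X n ω from
      funext fun ω => Finset.sum_apply ω _ _]
    exact Finset.measurable_sum _ fun n _ => (hXmeas n).comp measurable_id
  have hsum_bdd : ∀ ω, |(∑ n ∈ Finset.Icc 1 N, X n) ω| ≤ N := by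
    intro ω
    rw [Finset.sum_apply]
    calc |∑ n ∈ Finset.Icc 1 N, X n ω| ≤ ∑ n ∈ Finset.Icc 1 N, |X n ω| :=
          Finset.abs_sum_le_sum_abs _ _
      _ ≤ ∑ n ∈ Finset.Icc 1 N, 1 := Finset.sum_le_sum fun n _ => hXbdd n ω
      _ ≤ (N : ℝ) := by
          rw [Finset.sum_const, nsmul_eq_mul, mul_one, Nat.card_Icc]
          norm_num
  have hintE : Integrable (fun ω => Real.exp (l * (∑ n ∈ Finset.Icc 1 N, X n) ω)) μ := by
    refine integrable_of_bdd ((hsum_meas.const_mul l).exp) (c := Real.exp (l * N)) fun ω => ?_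
    rw [abs_of_nonneg (Real.exp_pos _).le]
    apply Real.exp_le_exp.mpr
    calc l * (∑ n ∈ Finset.Icc 1 N, X n) ω ≤ l * |(∑ n ∈ Finset.Icc 1 N, X n) ω| :=
          mul_le_mul_of_nonneg_left (le_abs_self _) hlpos.le
      _ ≤ l * N := mul_le_mul_of_nonneg_left (hsum_bdd ω) hlpos.le
  have hmgf_sum : mgf (∑ n ∈ Finset.Icc 1 N, X n) μ l ≤ Real.exp (l ^ 2 * R) := by
    rw [hXind.mgf_sum hXmeas]
    calc ∏ n ∈ Finset.Icc 1 N, mgf (X n) μ l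
        ≤ ∏ n ∈ Finset.Icc 1 N, Real.exp (l ^ 2 * ρ n) := by
          apply Finset.prod_le_prod (fun n _ => mgf_nonneg) (fun n _ => hmgf n)
      _ = Real.exp (∑ n ∈ Finset.Icc 1 N, l ^ 2 * ρ n) := by rw [Real.exp_sum]
      _ = Real.exp (l ^ 2 * R) := by rw [← Finset.mul_sum]
  -- Chernoff
  have hcher := measure_ge_le_exp_mul_mgf (μ := μ) (X := ∑ n ∈ Finset.Icc 1 N, X n)
    x hlpos.le hintE
  have hset : {ω | x ≤ ∑ n ∈ Finset.Icc 1 N, a n * Y n ω}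
      = {ω | x ≤ (∑ n ∈ Finset.Icc 1 N, X n) ω} := by
    congr 1 with ω
    simp only [Set.mem_setOf_eq, Finset.sum_apply]
    exact Iff.rfl
  rw [hset]
  rw [ENNReal.le_ofReal_iff_toReal_le (measure_ne_top _ _) (Real.exp_pos _).le]
  calc (μ {ω | x ≤ (∑ n ∈ Finset.Icc 1 N, X n) ω}).toReal
      ≤ Real.exp (-l * x) * mgf (∑ n ∈ Finset.Icc 1 N, X n) μ l := hcher
    _ ≤ Real.exp (-l * x) * Real.exp (l ^ 2 * R) :=
        mul_le_mul_of_nonneg_left hmgf_sum (Real.exp_pos _).le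
    _ = Real.exp (-l * x + l ^ 2 * R) := (Real.exp_add _ _).symm
    _ = Real.exp (-(x ^ 2) / (4 * R)) := by
        congr 1
        rw [hldef]
        field_simp
        ring

lemma exp_cast_eq (n : ℕ) (t : ℝ) :
    Complex.exp (2 * (π : ℂ) * (n : ℂ) * (t : ℂ) * Complex.I)
      = Complex.exp (((2 * π * n * t : ℝ) : ℂ) * Complex.I) := by
  congr 1
  push_cast
  ring

lemma main_prob {Ω : Type*} [MeasurableSpace Ω] (μ : Measure Ω) [IsProbabilityMeasure μ]
    (Z : ℕ → ℕ → Ω → ℝ) (hmeas : ∀ m n, Measurable (Z m n))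
    (hbdd : ∀ m n ω, |Z m n ω| ≤ 1) (hmean : ∀ m n, ∫ ω, Z m n ω ∂μ = 0)
    (hind : ∀ m, iIndepFun (Z m) μ)
    (ρ : ℕ → ℝ) (hρpos : ∀ n, 0 < ρ n)
    (hρvar : ∀ m n, variance (Z m n) μ ≤ ρ n)
    (hρdiv : Tendsto (fun N : ℕ => (Real.log N)⁻¹ * ∑ n ∈ Finset.Icc 1 N, ρ n) atTop atTop) :
    ∀ᵐ ω ∂μ, ∀ᶠ N in atTop, ∀ m ∈ Finset.Icc 1 N, ∀ j ∈ Finset.range (N ^ 3 + 1),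
      |∑ n ∈ Finset.Icc 1 N, Real.cos (2 * π * n * (j / (N : ℝ) ^ 3)) * Z m n ω|
        ≤ 6 * Real.sqrt (Real.log N * ∑ n ∈ Finset.Icc 1 N, ρ n) ∧
      |∑ n ∈ Finset.Icc 1 N, Real.sin (2 * π * n * (j / (N : ℝ) ^ 3)) * Z m n ω|
        ≤ 6 * Real.sqrt (Real.log N * ∑ n ∈ Finset.Icc 1 N, ρ n) := by
  classical
  set R : ℕ → ℝ := fun N => ∑ n ∈ Finset.Icc 1 N, ρ n with hRdef
  set x : ℕ → ℝ := fun N => 6 * Real.sqrt (Real.log N * R N) with hxdef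
  -- threshold
  obtain ⟨N₀, hN₀⟩ : ∃ N₀ : ℕ, ∀ N ≥ N₀, 2 ≤ N ∧ 9 ≤ (Real.log N)⁻¹ * R N := by
    have h1 := hρdiv.eventually_ge_atTop 9
    have h2 : ∀ᶠ N : ℕ in atTop, 2 ≤ N := eventually_ge_atTop 2
    exact eventually_atTop.mp (h2.and h1)
  have hN₀2 : 2 ≤ N₀ + 2 := le_add_self
  -- basic facts for N ≥ N₀
  have hfacts : ∀ N, N₀ ≤ N → 0 < Real.log N ∧ 9 * Real.log N ≤ R N ∧ 0 < R N ∧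
      0 < x N ∧ x N ≤ 2 * R N := by
    intro N hN
    obtain ⟨hN2, h9⟩ := hN₀ N hN
    have hlog : 0 < Real.log N := Real.log_pos (by exact_mod_cast hN2)
    have hR9 : 9 * Real.log N ≤ R N := by
      have h := mul_le_mul_of_nonneg_left h9 hlog.le
      rw [← mul_assoc, mul_inv_cancel₀ hlog.ne', one_mul] at h
      linarith
    have hRpos : 0 < R N := lt_of_lt_of_le (by positivity) hR9
    have hxpos : 0 < x N := by
      simp only [hxdef]
      have : 0 < Real.log N * R N := mul_pos hlog hRpos
      positivity
    have hsq : (x N) ^ 2 = 36 * (Real.log N * R N) := by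
      simp only [hxdef]
      rw [mul_pow, Real.sq_sqrt (by positivity)]
      ring
    have hx2R : x N ≤ 2 * R N := by
      have h1 : (x N) ^ 2 ≤ (2 * R N) ^ 2 := by rw [hsq]; nlinarith
      have h2 := Real.sqrt_le_sqrt h1
      rwa [Real.sqrt_sq hxpos.le, Real.sqrt_sq (by positivity)] at h2
    exact ⟨hlog, hR9, hRpos, hxpos, hx2R⟩
  have hsqx : ∀ N, N₀ ≤ N → (x N) ^ 2 = 36 * (Real.log N * R N) := by
    intro N hN
    obtain ⟨hlog, hR9, hRpos, _, _⟩ := hfacts N hN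
    simp only [hxdef]
    rw [mul_pow, Real.sq_sqrt (by positivity)]
    ring
  have hN₀2 : 2 ≤ N₀ := (hN₀ N₀ le_rfl).1
  -- events
  set E : ℕ → ℕ → (ℕ → ℝ) → Set Ω := fun N m a =>
    {ω | x N ≤ ∑ n ∈ Finset.Icc 1 N, a n * Z m n ω} with hEdef
  set cc : ℕ → ℕ → ℕ → ℝ := fun N j n => Real.cos (2 * π * n * (j / (N : ℝ) ^ 3)) with hccdef
  set ss : ℕ → ℕ → ℕ → ℝ := fun N j n => Real.sin (2 * π * n * (j / (N : ℝ) ^ 3)) with hssdef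
  set A : ℕ → Set Ω := fun N =>
    ⋃ m ∈ Finset.Icc 1 N, ⋃ j ∈ Finset.range (N ^ 3 + 1),
      (E N m (cc N j) ∪ E N m (fun n => -cc N j n) ∪ E N m (ss N j)
        ∪ E N m (fun n => -ss N j n)) with hAdef
  -- single event bound
  have hsingle : ∀ N, N₀ ≤ N → ∀ m, ∀ a : ℕ → ℝ, (∀ n, |a n| ≤ 1) →
      μ (E N m a) ≤ ENNReal.ofReal (((N : ℝ) ^ 9)⁻¹) := by
    intro N hN m a ha
    obtain ⟨hlog, hR9, hRpos, hxpos, hx2R⟩ := hfacts N hN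
    have hNpos : (0 : ℝ) < N := by
      have := (hN₀ N hN).1; exact_mod_cast Nat.lt_of_lt_of_le (by norm_num) this
    have htb := tail_bound μ (Z m) (hmeas m) (hbdd m) (hmean m) (hind m) ρ
      (fun n => (hρpos n).le) (hρvar m) a ha N hxpos hx2R
    refine htb.trans (le_of_eq ?_)
    congr 1
    rw [hsqx N hN]
    rw [show -(36 * (Real.log N * R N)) / (4 * R N) = -(Real.log ((N : ℝ) ^ 9)) by
      rw [Real.log_pow]; push_cast; field_simp; ring]
    rw [Real.exp_neg, Real.exp_log (by positivity)]
  -- union bound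
  have hA : ∀ N, N₀ ≤ N → μ (A N) ≤ ENNReal.ofReal (8 * ((N : ℝ) ^ 5)⁻¹) := by
    intro N hN
    have hN2 : (2 : ℝ) ≤ N := by exact_mod_cast (hN₀ N hN).1
    have hNpos : (0 : ℝ) < N := by linarith
    set c : ℝ≥0∞ := ENNReal.ofReal (((N : ℝ) ^ 9)⁻¹) with hcdef
    have hunion : ∀ m j, μ (E N m (cc N j) ∪ E N m (fun n => -cc N j n) ∪ E N m (ss N j)
        ∪ E N m (fun n => -ss N j n)) ≤ 4 * c := by
      intro m j
      have h1 := hsingle N hN m (cc N j) (fun n => Real.abs_cos_le_one _)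
      have h2 := hsingle N hN m (fun n => -cc N j n) (fun n => by
        rw [abs_neg]; exact Real.abs_cos_le_one _)
      have h3 := hsingle N hN m (ss N j) (fun n => Real.abs_sin_le_one _)
      have h4 := hsingle N hN m (fun n => -ss N j n) (fun n => by
        rw [abs_neg]; exact Real.abs_sin_le_one _)
      calc μ (E N m (cc N j) ∪ E N m (fun n => -cc N j n) ∪ E N m (ss N j)
          ∪ E N m (fun n => -ss N j n))
          ≤ μ (E N m (cc N j) ∪ E N m (fun n => -cc N j n) ∪ E N m (ss N j))
            + μ (E N m (fun n => -ss N j n)) := measure_union_le _ _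
        _ ≤ (μ (E N m (cc N j) ∪ E N m (fun n => -cc N j n)) + μ (E N m (ss N j)))
            + μ (E N m (fun n => -ss N j n)) := by gcongr; exact measure_union_le _ _
        _ ≤ ((μ (E N m (cc N j)) + μ (E N m (fun n => -cc N j n))) + μ (E N m (ss N j)))
            + μ (E N m (fun n => -ss N j n)) := by gcongr; exact measure_union_le _ _
        _ ≤ ((c + c) + c) + c := by gcongr
        _ = 4 * c := by ring
    calc μ (A N) ≤ ∑ m ∈ Finset.Icc 1 N, μ (⋃ j ∈ Finset.range (N ^ 3 + 1),
          (E N m (cc N j) ∪ E N m (fun n => -cc N j n) ∪ E N m (ss N j)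
            ∪ E N m (fun n => -ss N j n))) := measure_biUnion_finset_le _ _
      _ ≤ ∑ m ∈ Finset.Icc 1 N, ∑ j ∈ Finset.range (N ^ 3 + 1),
          μ (E N m (cc N j) ∪ E N m (fun n => -cc N j n) ∪ E N m (ss N j)
            ∪ E N m (fun n => -ss N j n)) :=
          Finset.sum_le_sum fun m _ => measure_biUnion_finset_le _ _
      _ ≤ ∑ m ∈ Finset.Icc 1 N, ∑ j ∈ Finset.range (N ^ 3 + 1), 4 * c :=
          Finset.sum_le_sum fun m _ => Finset.sum_le_sum fun j _ => hunion m j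
      _ = (N : ℝ≥0∞) * ((N ^ 3 + 1 : ℕ) * (4 * c)) := by
          rw [Finset.sum_const, Finset.sum_const, Finset.card_range, Nat.card_Icc,
            Nat.add_sub_cancel, nsmul_eq_mul, nsmul_eq_mul]
      _ ≤ ENNReal.ofReal (8 * ((N : ℝ) ^ 5)⁻¹) := by
          rw [hcdef, ← ENNReal.ofReal_natCast (N ^ 3 + 1), ← ENNReal.ofReal_natCast N,
            ← ENNReal.ofReal_ofNat 4, ← ENNReal.ofReal_mul (by positivity),
            ← ENNReal.ofReal_mul (by positivity), ← ENNReal.ofReal_mul (by positivity)]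
          apply ENNReal.ofReal_le_ofReal
          push_cast
          have hpow : (N : ℝ) ^ 6 ≤ (N : ℝ) ^ 9 := by
            apply pow_le_pow_right₀ (by linarith) (by norm_num)
          have h9 : (0 : ℝ) < (N : ℝ) ^ 9 := by positivity
          have h5 : (0 : ℝ) < (N : ℝ) ^ 5 := by positivity
          have e1 : (N:ℝ) * (((N:ℝ)^3+1) * (4 * ((N:ℝ)^9)⁻¹))
              = (4*(N:ℝ)^4 + 4*(N:ℝ)) / (N:ℝ)^9 := by field_simp
          have e2 : 8 * (((N:ℝ)^5)⁻¹) = (8*(N:ℝ)^4) / (N:ℝ)^9 := by field_simp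
          rw [e1, e2, div_le_div_iff₀ (by positivity) (by positivity)]
          have hN4 : (N:ℝ) ≤ (N:ℝ)^4 := by
            calc (N:ℝ) = (N:ℝ)^1 := (pow_one _).symm
              _ ≤ (N:ℝ)^4 := pow_le_pow_right₀ (by linarith) (by norm_num)
          nlinarith [h9, h5, hN4, sq_nonneg ((N:ℝ)^2)]
  -- Borel–Cantelli
  have hsummable : Summable (fun k : ℕ => 8 * (((k : ℝ) + 1) ^ 2)⁻¹) := by
    have h := (summable_nat_add_iff 1).mpr (summable_one_div_nat_pow.mpr (by norm_num : 1 < 2))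
    have h' : Summable (fun k : ℕ => (((k : ℝ) + 1) ^ 2)⁻¹) := by
      refine h.congr fun k => ?_
      push_cast
      rw [one_div]
    exact h'.mul_left 8
  have hBsum : (∑' k : ℕ, μ (A (N₀ + k))) ≠ ⊤ := ne_top_of_lt <| by
    have hle : ∀ k : ℕ, μ (A (N₀ + k)) ≤ ENNReal.ofReal (8 * (((k : ℝ) + 1) ^ 2)⁻¹) := by
      intro k
      refine (hA (N₀ + k) (Nat.le_add_right _ _)).trans (ENNReal.ofReal_le_ofReal ?_)
      have h1 : (1 : ℝ) ≤ (k : ℝ) + 1 := by have := Nat.cast_nonneg (α := ℝ) k; linarith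
      have h2 : ((k : ℝ) + 1) ^ 2 ≤ ((N₀ + k : ℕ) : ℝ) ^ 5 := by
        calc ((k : ℝ) + 1) ^ 2 ≤ ((k : ℝ) + 1) ^ 5 :=
              pow_le_pow_right₀ h1 (by norm_num)
          _ ≤ ((N₀ + k : ℕ) : ℝ) ^ 5 := by
              apply pow_le_pow_left₀ (by positivity) _ 5
              push_cast
              have : (2 : ℝ) ≤ (N₀ : ℝ) := by exact_mod_cast hN₀2
              linarith
      have h3 : (0 : ℝ) < ((k : ℝ) + 1) ^ 2 := by positivity
      exact mul_le_mul_of_nonneg_left (inv_anti₀ h3 h2) (by norm_num)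
    calc (∑' k : ℕ, μ (A (N₀ + k))) ≤ ∑' k : ℕ, ENNReal.ofReal (8 * (((k : ℝ) + 1) ^ 2)⁻¹) :=
          ENNReal.tsum_le_tsum hle
      _ = ENNReal.ofReal (∑' k : ℕ, 8 * (((k : ℝ) + 1) ^ 2)⁻¹) :=
          (ENNReal.ofReal_tsum_of_nonneg (fun k => by positivity) hsummable).symm
      _ < ⊤ := ENNReal.ofReal_lt_top
  have hae := ae_eventually_notMem hBsum
  filter_upwards [hae] with ω hω
  obtain ⟨k₁, hk₁⟩ := eventually_atTop.mp hω
  rw [eventually_atTop]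
  refine ⟨N₀ + k₁, fun N hN m hm j hj => ?_⟩
  have hNA : ω ∉ A N := by
    have hNeq : N = N₀ + (N - N₀) := by omega
    rw [hNeq]
    exact hk₁ (N - N₀) (by omega)
  rw [hAdef] at hNA
  simp only [Set.mem_iUnion, not_exists] at hNA
  have hnotm := hNA m hm j hj
  simp only [Set.mem_union, not_or, hEdef, Set.mem_setOf_eq, not_le] at hnotm
  obtain ⟨⟨⟨h1, h2⟩, h3⟩, h4⟩ := hnotm
  have hneg : ∀ a : ℕ → ℝ, ∑ n ∈ Finset.Icc 1 N, (-a n) * Z m n ω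
      = -∑ n ∈ Finset.Icc 1 N, a n * Z m n ω := by
    intro a
    rw [← Finset.sum_neg_distrib]
    congr 1 with n
    ring
  rw [hneg] at h2 h4
  simp only [hxdef, hRdef, hccdef, hssdef] at h1 h2 h3 h4
  constructor
  · exact abs_le.mpr ⟨by linarith, h1.le⟩
  · exact abs_le.mpr ⟨by linarith, h3.le⟩

set_option maxHeartbeats 1000000 in
/-- Chernoff-type sup-norm bound for random trigonometric polynomials: almost surely
`max_{1≤m≤N} max_{t∈[0,1]} |∑_{n=1}^N Z_{m,n} e(nt)| ≤ C(ω) √(log N · ∑_{n≤N} ρ_n)`. -/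
theorem sup_norm_random_trig_poly
    {Ω : Type*} [MeasurableSpace Ω] (μ : Measure Ω) [IsProbabilityMeasure μ]
    (Z : ℕ → ℕ → Ω → ℝ) (hmeas : ∀ m n, Measurable (Z m n))
    (hbdd : ∀ m n ω, |Z m n ω| ≤ 1) (hmean : ∀ m n, ∫ ω, Z m n ω ∂μ = 0)
    (hind : ∀ m, iIndepFun (Z m) μ)
    (ρ : ℕ → ℝ) (hρpos : ∀ n, 0 < ρ n)
    (hρvar : ∀ m n, variance (Z m n) μ ≤ ρ n)
    (hρdiv : Tendsto (fun N : ℕ => (Real.log N)⁻¹ * ∑ n ∈ Finset.Icc 1 N, ρ n) atTop atTop) :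
    ∀ᵐ ω ∂μ, ∃ C : ℝ, ∀ N : ℕ, 2 ≤ N → ∀ m ∈ Finset.Icc 1 N, ∀ t ∈ Set.Icc (0 : ℝ) 1,
      ‖∑ n ∈ Finset.Icc 1 N, (Z m n ω : ℂ) * Complex.exp (2 * π * n * t * Complex.I)‖ ≤
        C * Real.sqrt (Real.log N * ∑ n ∈ Finset.Icc 1 N, ρ n) := by
  -- deterministic threshold
  obtain ⟨N₀, hN₀⟩ : ∃ N₀ : ℕ, ∀ N ≥ N₀, 2 ≤ N ∧ 9 ≤ (Real.log N)⁻¹ *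
      ∑ n ∈ Finset.Icc 1 N, ρ n := by
    have h1 := hρdiv.eventually_ge_atTop 9
    have h2 : ∀ᶠ N : ℕ in atTop, 2 ≤ N := eventually_ge_atTop 2
    exact eventually_atTop.mp (h2.and h1)
  filter_upwards [main_prob μ Z hmeas hbdd hmean hind ρ hρpos hρvar hρdiv] with ω hω
  obtain ⟨M₁, hM₁⟩ := eventually_atTop.mp hω
  set M : ℕ := max M₁ N₀ with hMdef
  have hs0 : 0 < Real.sqrt (Real.log 2 * ρ 1) := by
    apply Real.sqrt_pos.mpr
    exact mul_pos (Real.log_pos one_lt_two) (hρpos 1)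
  refine ⟨max ((M : ℝ) / Real.sqrt (Real.log 2 * ρ 1)) 19, fun N hN2 m hm t ht => ?_⟩
  set R : ℝ := ∑ n ∈ Finset.Icc 1 N, ρ n with hRdef
  have hNR : (1 : ℝ) < N := by exact_mod_cast hN2
  have hlog2 : Real.log 2 ≤ Real.log N := Real.log_le_log (by norm_num) (by exact_mod_cast hN2)
  have hlogpos : 0 < Real.log N := Real.log_pos hNR
  have hRge : ρ 1 ≤ R := by
    apply Finset.single_le_sum (fun n _ => (hρpos n).le)
    simp [Finset.mem_Icc]
    omega
  have hRpos : 0 < R := lt_of_lt_of_le (hρpos 1) hRge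
  have hsle : Real.sqrt (Real.log 2 * ρ 1) ≤ Real.sqrt (Real.log N * R) := by
    apply Real.sqrt_le_sqrt
    apply mul_le_mul hlog2 hRge (hρpos 1).le hlogpos.le
  -- trivial bound on the polynomial
  have htriv : ‖∑ n ∈ Finset.Icc 1 N, (Z m n ω : ℂ)
      * Complex.exp (2 * π * n * t * Complex.I)‖ ≤ (N : ℝ) := by
    calc ‖∑ n ∈ Finset.Icc 1 N, (Z m n ω : ℂ) * Complex.exp (2 * π * n * t * Complex.I)‖
        ≤ ∑ n ∈ Finset.Icc 1 N, ‖(Z m n ω : ℂ) * Complex.exp (2 * π * n * t * Complex.I)‖ :=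
          norm_sum_le _ _
      _ ≤ ∑ n ∈ Finset.Icc 1 N, 1 := by
          apply Finset.sum_le_sum
          intro n _
          rw [norm_mul, exp_cast_eq,
            Complex.norm_exp_ofReal_mul_I, mul_one, Complex.norm_real, Real.norm_eq_abs]
          exact hbdd m n ω
      _ ≤ (N : ℝ) := by
          rw [Finset.sum_const, Nat.card_Icc, Nat.add_sub_cancel, nsmul_eq_mul, mul_one]
  rcases lt_or_ge N M with hNM | hNM
  · -- small N : use the trivial bound
    have hNM' : (N : ℝ) ≤ M := by exact_mod_cast hNM.le
    have hdiv0 : (0:ℝ) ≤ (M : ℝ) / Real.sqrt (Real.log 2 * ρ 1) := by positivity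
    calc ‖∑ n ∈ Finset.Icc 1 N, (Z m n ω : ℂ) * Complex.exp (2 * π * n * t * Complex.I)‖
        ≤ (N : ℝ) := htriv
      _ ≤ ((M : ℝ) / Real.sqrt (Real.log 2 * ρ 1)) * Real.sqrt (Real.log 2 * ρ 1) := by
          rw [div_mul_cancel₀ _ hs0.ne']
          exact hNM'
      _ ≤ (max ((M : ℝ) / Real.sqrt (Real.log 2 * ρ 1)) 19) * Real.sqrt (Real.log N * R) :=
          mul_le_mul (le_max_left _ _) hsle hs0.le (le_trans hdiv0 (le_max_left _ _))
  · -- large N : use the probabilistic bound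
    have hN₀N : N₀ ≤ N := le_trans (le_max_right _ _) hNM
    have hM₁N : M₁ ≤ N := le_trans (le_max_left _ _) hNM
    obtain ⟨h2N, h9⟩ := hN₀ N hN₀N
    have hR9 : 9 * Real.log N ≤ R := by
      have h := mul_le_mul_of_nonneg_left h9 hlogpos.le
      rw [← mul_assoc, mul_inv_cancel₀ hlogpos.ne', one_mul] at h
      linarith
    have ht0 : 0 ≤ t := ht.1
    have ht1 : t ≤ 1 := ht.2
    have hN0' : (0:ℝ) < N := by linarith
    have hN3pos : (0:ℝ) < (N:ℝ) ^ 3 := by positivity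
    set j : ℕ := ⌊t * (N:ℝ) ^ 3⌋₊ with hjdef
    have hjle : (j:ℝ) ≤ t * (N:ℝ) ^ 3 := Nat.floor_le (by positivity)
    have hjlt : t * (N:ℝ) ^ 3 < (j:ℝ) + 1 := Nat.lt_floor_add_one _
    have hjmem : j ∈ Finset.range (N ^ 3 + 1) := by
      rw [Finset.mem_range, Nat.lt_succ_iff]
      have hcast : t * (N:ℝ) ^ 3 ≤ ((N ^ 3 : ℕ) : ℝ) := by push_cast; nlinarith
      calc j = ⌊t * (N:ℝ) ^ 3⌋₊ := rfl
        _ ≤ ⌊((N ^ 3 : ℕ) : ℝ)⌋₊ := Nat.floor_mono hcast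
        _ = N ^ 3 := Nat.floor_natCast _
    set s : ℝ := (j : ℝ) / (N : ℝ) ^ 3 with hsdef
    have hts1 : s ≤ t := by rw [hsdef, div_le_iff₀ hN3pos]; linarith
    have hts2 : t - s ≤ ((N:ℝ) ^ 3)⁻¹ := by
      have h1 : t * (N:ℝ) ^ 3 - j ≤ 1 := by linarith
      calc t - s = (t * (N:ℝ) ^ 3 - j) / (N:ℝ) ^ 3 := by
            rw [hsdef, sub_div, mul_div_cancel_right₀ _ hN3pos.ne']
        _ ≤ 1 / (N:ℝ) ^ 3 := by gcongr
        _ = ((N:ℝ) ^ 3)⁻¹ := one_div _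
    obtain ⟨Hcos, Hsin⟩ := hM₁ N hM₁N m hm j hjmem
    rw [← hRdef, ← hsdef] at Hcos Hsin
    -- difference bound
    have hdiff : ‖(∑ n ∈ Finset.Icc 1 N, (Z m n ω : ℂ) * Complex.exp (2 * π * n * t * Complex.I))
        - ∑ n ∈ Finset.Icc 1 N, (Z m n ω : ℂ) * Complex.exp (2 * π * n * s * Complex.I)‖
        ≤ 4 * π := by
      rw [← Finset.sum_sub_distrib]
      calc ‖∑ n ∈ Finset.Icc 1 N, ((Z m n ω : ℂ) * Complex.exp (2 * π * n * t * Complex.I)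
            - (Z m n ω : ℂ) * Complex.exp (2 * π * n * s * Complex.I))‖
          ≤ ∑ n ∈ Finset.Icc 1 N, ‖(Z m n ω : ℂ) * Complex.exp (2 * π * n * t * Complex.I)
            - (Z m n ω : ℂ) * Complex.exp (2 * π * n * s * Complex.I)‖ := norm_sum_le _ _
        _ ≤ ∑ n ∈ Finset.Icc 1 N, 4 * π * ((N:ℝ) ^ 2)⁻¹ := by
            apply Finset.sum_le_sum
            intro n hn
            have hn1 : 1 ≤ n := (Finset.mem_Icc.mp hn).1
            have hnN : (n : ℝ) ≤ N := by exact_mod_cast (Finset.mem_Icc.mp hn).2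
            have hnn : (0:ℝ) ≤ n := Nat.cast_nonneg n
            rw [← mul_sub, norm_mul, exp_cast_eq, exp_cast_eq]
            calc ‖((Z m n ω : ℝ) : ℂ)‖ * ‖Complex.exp (((2 * π * n * t : ℝ) : ℂ) * Complex.I)
                  - Complex.exp (((2 * π * n * s : ℝ) : ℂ) * Complex.I)‖
                ≤ 1 * (2 * |2 * π * n * t - 2 * π * n * s|) := by
                  apply mul_le_mul _ (exp_I_diff _ _) (norm_nonneg _) zero_le_one
                  rw [Complex.norm_real]
                  exact hbdd m n ω
              _ = 4 * π * ((n : ℝ) * (t - s)) := by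
                  have hnonneg : (0:ℝ) ≤ 2 * π * ↑n * t - 2 * π * ↑n * s := by
                    nlinarith [Real.pi_pos.le, mul_nonneg (mul_nonneg
                      (mul_nonneg (by norm_num : (0:ℝ) ≤ 2) Real.pi_pos.le) hnn)
                      (sub_nonneg.mpr hts1)]
                  rw [one_mul, abs_of_nonneg hnonneg]
                  ring
              _ ≤ 4 * π * ((N : ℝ) * ((N:ℝ) ^ 3)⁻¹) := by
                  have h1 : (n : ℝ) * (t - s) ≤ (N : ℝ) * ((N:ℝ) ^ 3)⁻¹ := by
                    apply mul_le_mul hnN hts2 (by linarith) hN0'.le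
                  nlinarith [Real.pi_pos]
              _ = 4 * π * ((N:ℝ) ^ 2)⁻¹ := by
                  rw [show ((N:ℝ) ^ 3) = (N:ℝ) * (N:ℝ) ^ 2 by ring, mul_inv,
                    ← mul_assoc, ← mul_assoc]
                  rw [show 4 * π * (N:ℝ) * ((N:ℝ))⁻¹ = 4 * π * ((N:ℝ) * ((N:ℝ))⁻¹) by ring,
                    mul_inv_cancel₀ hN0'.ne', mul_one]
        _ ≤ 4 * π := by
            rw [Finset.sum_const, Nat.card_Icc, Nat.add_sub_cancel, nsmul_eq_mul]
            have hN2' : (1:ℝ) ≤ (N:ℝ) ^ 2 := by nlinarith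
            calc (N:ℝ) * (4 * π * ((N:ℝ) ^ 2)⁻¹) = 4 * π * ((N:ℝ) * ((N:ℝ) ^ 2)⁻¹) := by ring
              _ = 4 * π * ((N:ℝ))⁻¹ := by
                  rw [show ((N:ℝ) ^ 2) = (N:ℝ) * (N:ℝ) by ring, mul_inv,
                    mul_inv_cancel_left₀ hN0'.ne']
              _ ≤ 4 * π * 1 := by
                  apply mul_le_mul_of_nonneg_left _ (by positivity)
                  rw [inv_le_one_iff₀]
                  right; linarith
              _ = 4 * π := mul_one _
    -- bound at the grid point
    have hPs : ‖∑ n ∈ Finset.Icc 1 N, (Z m n ω : ℂ)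
        * Complex.exp (2 * π * n * s * Complex.I)‖ ≤ 12 * Real.sqrt (Real.log N * R) := by
      set B : ℂ := ∑ n ∈ Finset.Icc 1 N, (Z m n ω : ℂ)
        * Complex.exp (2 * π * n * s * Complex.I) with hBdef
      have hre : B.re = ∑ n ∈ Finset.Icc 1 N, Real.cos (2 * π * n * s) * Z m n ω := by
        rw [hBdef, Complex.re_sum]
        apply Finset.sum_congr rfl
        intro n _
        rw [exp_cast_eq, Complex.re_ofReal_mul, Complex.exp_ofReal_mul_I_re, mul_comm]
      have him : B.im = ∑ n ∈ Finset.Icc 1 N, Real.sin (2 * π * n * s) * Z m n ω := by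
        rw [hBdef, Complex.im_sum]
        apply Finset.sum_congr rfl
        intro n _
        rw [exp_cast_eq, Complex.im_ofReal_mul, Complex.exp_ofReal_mul_I_im, mul_comm]
      calc ‖B‖ ≤ |B.re| + |B.im| := by
            exact Complex.norm_le_abs_re_add_abs_im B
        _ ≤ 6 * Real.sqrt (Real.log N * R) + 6 * Real.sqrt (Real.log N * R) := by
            rw [hre, him]
            exact add_le_add Hcos Hsin
        _ = 12 * Real.sqrt (Real.log N * R) := by ring
    -- small constant absorption
    have hsqrt_lb : 3 * Real.log 2 ≤ Real.sqrt (Real.log N * R) := by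
      have hlog2pos : 0 < Real.log 2 := Real.log_pos one_lt_two
      have h1 : (3 * Real.log 2) ^ 2 ≤ Real.log N * R := by
        have h2 : Real.log 2 * (9 * Real.log 2) ≤ Real.log N * R := by
          apply mul_le_mul hlog2 _ (by positivity) hlogpos.le
          calc 9 * Real.log 2 ≤ 9 * Real.log N := by linarith
            _ ≤ R := hR9
        nlinarith
      calc 3 * Real.log 2 = Real.sqrt ((3 * Real.log 2) ^ 2) :=
            (Real.sqrt_sq (by positivity)).symm
        _ ≤ Real.sqrt (Real.log N * R) := Real.sqrt_le_sqrt h1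
    have h4pi : 4 * π ≤ 7 * Real.sqrt (Real.log N * R) := by
      have := Real.pi_lt_d2
      have := Real.log_two_gt_d9
      nlinarith
    have hsplit : (∑ n ∈ Finset.Icc 1 N, (Z m n ω : ℂ)
        * Complex.exp (2 * π * n * t * Complex.I))
        = (∑ n ∈ Finset.Icc 1 N, (Z m n ω : ℂ) * Complex.exp (2 * π * n * s * Complex.I))
        + ((∑ n ∈ Finset.Icc 1 N, (Z m n ω : ℂ) * Complex.exp (2 * π * n * t * Complex.I))
        - ∑ n ∈ Finset.Icc 1 N, (Z m n ω : ℂ) * Complex.exp (2 * π * n * s * Complex.I)) := by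
      ring
    calc ‖∑ n ∈ Finset.Icc 1 N, (Z m n ω : ℂ) * Complex.exp (2 * π * n * t * Complex.I)‖
        ≤ ‖∑ n ∈ Finset.Icc 1 N, (Z m n ω : ℂ) * Complex.exp (2 * π * n * s * Complex.I)‖
          + ‖(∑ n ∈ Finset.Icc 1 N, (Z m n ω : ℂ) * Complex.exp (2 * π * n * t * Complex.I))
          - ∑ n ∈ Finset.Icc 1 N, (Z m n ω : ℂ)
            * Complex.exp (2 * π * n * s * Complex.I)‖ := by
          rw [hsplit]
          exact (norm_add_le _ _).trans (by rw [← hsplit])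
      _ ≤ 12 * Real.sqrt (Real.log N * R) + 4 * π := add_le_add hPs hdiff
      _ ≤ 19 * Real.sqrt (Real.log N * R) := by linarith
      _ ≤ (max ((M : ℝ) / Real.sqrt (Real.log 2 * ρ 1)) 19) * Real.sqrt (Real.log N * R) :=
          mul_le_mul_of_nonneg_right (le_max_right _ _) (Real.sqrt_nonneg _)
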